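/- arXiv:1107.4726 — 2 statements merged into one kernel-verified Lean document; each statement's English description precedes it below -/
import Mathlib

section
/- Caristi's fixed point theorem under 𝒯_c: Let (E,‖·‖) be a 𝒯_c-complete RN module over ℝ with base (Ω,𝓕,P) such that E has the countable concatenation property, and φ : E → L̄⁰(𝓕) a proper function which is 𝒯_c-lower semicontinuous, bounded from below, and has the local property. If T : E → E is a mapping such that φ(Tu) + ‖Tu − u‖ ≤ φ(u) for all u ∈ E, then T has a fixed point. -/
open MeasureTheory ENNReal Set Filter

namespace GYY

variable {Ω : Type*} [MeasurableSpace Ω]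

/-- `L⁰(𝓕)`: equivalence classes of real-valued random variables on `(Ω,𝓕,P)`. -/
abbrev L0 (P : Measure Ω) := Ω →ₘ[P] ℝ

/-- `L̄⁰(𝓕)`: equivalence classes of extended-real-valued random variables. -/
abbrev L0e (P : Measure Ω) := Ω →ₘ[P] EReal

/-- `L⁰₊₊(𝓕)`: the (classes of) random variables that are strictly positive a.s. -/
def L0pp (P : Measure Ω) : Set (L0 P) := {ε | ∀ᵐ ω ∂P, 0 < ε ω}

/-- The equivalence class `Ĩ_A` of the indicator function of a measurable set `A`. -/
noncomputable def indL0 (P : Measure Ω) (A : Set Ω) (hA : MeasurableSet A) : L0 P :=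
  AEEqFun.mk (A.indicator fun _ => (1 : ℝ)) (aestronglyMeasurable_const.indicator hA)

/-- A random metric space (RM space) with base `(Ω,𝓕,P)`. -/
structure RMSpace (P : Measure Ω) (E : Type*) where
  d : E → E → L0 P
  d_nonneg : ∀ p q, ∀ᵐ ω ∂P, 0 ≤ d p q ω
  d_eq_zero_iff : ∀ p q, d p q = 0 ↔ p = q
  d_symm : ∀ p q, d p q = d q p
  d_triangle : ∀ p q r, ∀ᵐ ω ∂P, d p r ω ≤ d p q ω + d q r ω

/-- Convergence in probability `P` of a sequence in `L⁰(𝓕)`, i.e. convergence in the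
`(ε,λ)`-topology of `L⁰(𝓕)` with the random metric `d(p,q) = |p - q|`. -/
def TendstoProb (P : Measure Ω) (r : ℕ → L0 P) (s : L0 P) : Prop :=
  ∀ ε : ℝ, 0 < ε → ∀ lam ∈ Ioo (0 : ℝ) 1, ∃ N : ℕ, ∀ n ≥ N,
    ENNReal.ofReal (1 - lam) < P {ω | |r n ω - s ω| < ε}

namespace RMSpace

variable {P : Measure Ω} {E : Type*} (M : RMSpace P E)

/-- Convergence of a sequence in the `(ε,λ)`-topology of an RM space. -/
def TendstoEL (x : ℕ → E) (a : E) : Prop :=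
  ∀ ε : ℝ, 0 < ε → ∀ lam ∈ Ioo (0 : ℝ) 1, ∃ N : ℕ, ∀ n ≥ N,
    ENNReal.ofReal (1 - lam) < P {ω | M.d (x n) a ω < ε}

/-- Cauchy sequence for the `d_{ε,λ}`-uniformity of an RM space. -/
def CauchySeqEL (x : ℕ → E) : Prop :=
  ∀ ε : ℝ, 0 < ε → ∀ lam ∈ Ioo (0 : ℝ) 1, ∃ N : ℕ, ∀ m ≥ N, ∀ n ≥ N,
    ENNReal.ofReal (1 - lam) < P {ω | M.d (x m) (x n) ω < ε}

/-- `d_{ε,λ}`-completeness of an RM space (the `d_{ε,λ}`-uniformity is metrizable, hence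
completeness is equivalent to sequential completeness). -/
def CompleteEL : Prop := ∀ x : ℕ → E, M.CauchySeqEL x → ∃ a, M.TendstoEL x a

/-- `φ : E → L̄⁰(𝓕)` is `𝒯_{ε,λ}`-lower semicontinuous: its epigraph
`epi(φ) = {(x,r) ∈ E × L⁰ : φ(x) ≤ r}` is closed in
`(E,𝒯_{ε,λ}) × (L⁰(𝓕),𝒯_{ε,λ})` (sequentially; both topologies are metrizable). -/
def LscEL (φ : E → L0e P) : Prop :=
  ∀ (x : ℕ → E) (r : ℕ → L0 P) (a : E) (s : L0 P),
    (∀ n, ∀ᵐ ω ∂P, φ (x n) ω ≤ (r n ω : EReal)) →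
    M.TendstoEL x a → TendstoProb P r s →
    ∀ᵐ ω ∂P, φ a ω ≤ (s ω : EReal)

end RMSpace

/-- `φ` is proper on `G`: `φ(x) > -∞` a.s. for every `x ∈ G`, and `φ(x) < +∞` a.s.
for some `x ∈ G`. -/
def ProperOn {E : Type*} {P : Measure Ω} (φ : E → L0e P) (G : Set E) : Prop :=
  (∀ x ∈ G, ∀ᵐ ω ∂P, ⊥ < φ x ω) ∧ ∃ x ∈ G, ∀ᵐ ω ∂P, φ x ω < ⊤

/-- `φ` is bounded from below on `G` by an element of `L⁰(𝓕)`. -/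
def BddBelowOn {E : Type*} {P : Measure Ω} (φ : E → L0e P) (G : Set E) : Prop :=
  ∃ ξ : L0 P, ∀ x ∈ G, ∀ᵐ ω ∂P, (ξ ω : EReal) ≤ φ x ω

/-- `φ` is bounded from above on `G` by an element of `L⁰(𝓕)`. -/
def BddAboveOn {E : Type*} {P : Measure Ω} (φ : E → L0e P) (G : Set E) : Prop :=
  ∃ ξ : L0 P, ∀ x ∈ G, ∀ᵐ ω ∂P, φ x ω ≤ (ξ ω : EReal)

/-- `η = ⋀ φ(G)`, the infimum of `φ(G)` in the complete lattice `L̄⁰(𝓕)`. -/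
def IsInfOn {E : Type*} {P : Measure Ω} (φ : E → L0e P) (G : Set E) (η : L0e P) : Prop :=
  (∀ x ∈ G, ∀ᵐ ω ∂P, η ω ≤ φ x ω) ∧
    ∀ ζ : L0e P, (∀ x ∈ G, ∀ᵐ ω ∂P, ζ ω ≤ φ x ω) → ∀ᵐ ω ∂P, ζ ω ≤ η ω

/-- `η = ⋁ φ(G)`, the supremum of `φ(G)` in the complete lattice `L̄⁰(𝓕)`. -/
def IsSupOn {E : Type*} {P : Measure Ω} (φ : E → L0e P) (G : Set E) (η : L0e P) : Prop :=
  (∀ x ∈ G, ∀ᵐ ω ∂P, φ x ω ≤ η ω) ∧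
    ∀ ζ : L0e P, (∀ x ∈ G, ∀ᵐ ω ∂P, φ x ω ≤ ζ ω) → ∀ᵐ ω ∂P, η ω ≤ ζ ω

/-- `s = ⋁ g(G)` for an `L⁰(𝓕)`-valued function `g`. -/
def IsSupOnR {E : Type*} {P : Measure Ω} (g : E → L0 P) (G : Set E) (s : L0 P) : Prop :=
  (∀ x ∈ G, ∀ᵐ ω ∂P, g x ω ≤ s ω) ∧
    ∀ c : L0 P, (∀ x ∈ G, ∀ᵐ ω ∂P, g x ω ≤ c ω) → ∀ᵐ ω ∂P, s ω ≤ c ω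

/-- The Cauchy property (for the `d_{ε,λ}`-uniformity of `L⁰(𝓕)`, i.e. the uniformity of
convergence in probability) of the net `{φ(m) : m ∈ M}` indexed by `M` directed by the
order of `X`. -/
def CauchyNetProb {X : Type*} [Preorder X] {P : Measure Ω} (φ : X → L0e P) (M : Set X) : Prop :=
  ∀ ε : ℝ, 0 < ε → ∀ lam ∈ Ioo (0 : ℝ) 1, ∃ m₀ ∈ M, ∀ m₁ ∈ M, ∀ m₂ ∈ M,
    m₀ ≤ m₁ → m₀ ≤ m₂ →
      ENNReal.ofReal (1 - lam) < P {ω | |(φ m₁ ω).toReal - (φ m₂ ω).toReal| < ε}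

/-- The section filter of the net `{x_g : g ∈ G}`, `x_g = g`, indexed by `G` directed by the
order of `X`; the net is Cauchy iff this filter is a Cauchy filter. -/
def netFilter {X : Type*} [Preorder X] (G : Set X) : Filter X :=
  ⨅ g ∈ G, 𝓟 {y | y ∈ G ∧ g ≤ y}

/-- A random normed module (RN module) over `ℝ` with base `(Ω,𝓕,P)`: a left module `E`
over the algebra `L⁰(𝓕)` together with an `L⁰`-norm. -/
structure RNModule (P : Measure Ω) (E : Type*) [AddCommGroup E] where
  smul : L0 P → E → E
  one_smul : ∀ x, smul 1 x = x
  mul_smul : ∀ ξ η x, smul (ξ * η) x = smul ξ (smul η x)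
  smul_add : ∀ ξ x y, smul ξ (x + y) = smul ξ x + smul ξ y
  add_smul : ∀ ξ η x, smul (ξ + η) x = smul ξ x + smul η x
  nm : E → L0 P
  nm_nonneg : ∀ x, ∀ᵐ ω ∂P, 0 ≤ nm x ω
  nm_eq_zero_iff : ∀ x, nm x = 0 ↔ x = 0
  nm_smul : ∀ ξ x, ∀ᵐ ω ∂P, nm (smul ξ x) ω = |ξ ω| * nm x ω
  nm_add_le : ∀ x y, ∀ᵐ ω ∂P, nm (x + y) ω ≤ nm x ω + nm y ω

/-- The `𝒯_c`-neighbourhood filter of a point `r` of `L⁰(𝓕)`, with base the closed balls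
`{s : |s - r| ≤ ε}`, `ε ∈ L⁰₊₊`. -/
def cNhdsL0 (P : Measure Ω) (r : L0 P) : Filter (L0 P) :=
  ⨅ ε ∈ L0pp P, 𝓟 {s | ∀ᵐ ω ∂P, |s ω - r ω| ≤ ε ω}

namespace RNModule

variable {P : Measure Ω} {E : Type*} [AddCommGroup E] (N : RNModule P E)

/-- Convergence of sequences in the `(ε,λ)`-topology `𝒯_{ε,λ}` of an RN module. -/
def TendstoEL (x : ℕ → E) (a : E) : Prop :=
  ∀ ε : ℝ, 0 < ε → ∀ lam ∈ Ioo (0 : ℝ) 1, ∃ N' : ℕ, ∀ n ≥ N',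
    ENNReal.ofReal (1 - lam) < P {ω | N.nm (x n - a) ω < ε}

/-- Cauchy sequence for the `d_{ε,λ}`-uniformity of an RN module. -/
def CauchySeqEL (x : ℕ → E) : Prop :=
  ∀ ε : ℝ, 0 < ε → ∀ lam ∈ Ioo (0 : ℝ) 1, ∃ N' : ℕ, ∀ m ≥ N', ∀ n ≥ N',
    ENNReal.ofReal (1 - lam) < P {ω | N.nm (x m - x n) ω < ε}

/-- `𝒯_{ε,λ}`-completeness (the `d_{ε,λ}`-uniformity is metrizable, hence completeness is
equivalent to sequential completeness). -/
def CompleteEL : Prop := ∀ x : ℕ → E, N.CauchySeqEL x → ∃ a, N.TendstoEL x a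

/-- `G` is `𝒯_{ε,λ}`-closed (sequentially; `𝒯_{ε,λ}` is metrizable). -/
def ClosedEL (G : Set E) : Prop :=
  ∀ (x : ℕ → E) (a : E), (∀ n, x n ∈ G) → N.TendstoEL x a → a ∈ G

/-- `φ : G → L̄⁰(𝓕)` is `𝒯_{ε,λ}`-lower semicontinuous on `G`: its epigraph
`{(x,r) ∈ G × L⁰ : φ(x) ≤ r}` is closed in `(G,𝒯_{ε,λ}) × (L⁰(𝓕),𝒯_{ε,λ})`. -/
def LscELOn (φ : E → L0e P) (G : Set E) : Prop :=
  ∀ (x : ℕ → E) (r : ℕ → L0 P) (a : E) (s : L0 P),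
    (∀ n, x n ∈ G) → a ∈ G →
    (∀ n, ∀ᵐ ω ∂P, φ (x n) ω ≤ (r n ω : EReal)) →
    N.TendstoEL x a → TendstoProb P r s →
    ∀ᵐ ω ∂P, φ a ω ≤ (s ω : EReal)

/-- The neighbourhood filter of `x` in the locally `L⁰`-convex topology `𝒯_c`,
whose base consists of the closed balls `{y : ‖y - x‖ ≤ ε}`, `ε ∈ L⁰₊₊`. -/
def cNhds (x : E) : Filter E :=
  ⨅ ε ∈ L0pp P, 𝓟 {y | ∀ᵐ ω ∂P, N.nm (y - x) ω ≤ ε ω}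

/-- The `d_c`-uniformity of an RN module, with base `{U(ε) : ε ∈ L⁰₊₊}`,
`U(ε) = {(p,q) : ‖p - q‖ ≤ ε}`. -/
def cUniformity : Filter (E × E) :=
  ⨅ ε ∈ L0pp P, 𝓟 {p | ∀ᵐ ω ∂P, N.nm (p.1 - p.2) ω ≤ ε ω}

/-- `𝒯_c`-completeness: every Cauchy filter for the `d_c`-uniformity converges. -/
def cComplete : Prop :=
  ∀ F : Filter E, F.NeBot → F ×ˢ F ≤ N.cUniformity → ∃ x, F ≤ N.cNhds x

/-- The `𝒯_c`-closure of a subset. -/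
def cClosure (G : Set E) : Set E := {x | (N.cNhds x ⊓ 𝓟 G).NeBot}

/-- `G` is `𝒯_c`-closed. -/
def cClosed (G : Set E) : Prop := ∀ x, x ∈ N.cClosure G → x ∈ G

/-- `S` is `𝒯_c`-dense in `T`. -/
def cDenseIn (S T : Set E) : Prop := ∀ x ∈ T, x ∈ N.cClosure S

/-- The `𝒯_c`-boundary `∂_c G`. -/
def cBoundary (G : Set E) : Set E := N.cClosure G ∩ N.cClosure Gᶜ

/-- `φ : G → L̄⁰(𝓕)` is `𝒯_c`-lower semicontinuous on `G`: its epigraph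
`{(x,r) ∈ G × L⁰ : φ(x) ≤ r}` is closed in `(G,𝒯_c) × (L⁰(𝓕),𝒯_c)`. -/
def cLscOn (φ : E → L0e P) (G : Set E) : Prop :=
  ∀ (a : E) (s : L0 P), a ∈ G →
    ((N.cNhds a ×ˢ cNhdsL0 P s) ⊓
      𝓟 {p : E × L0 P | p.1 ∈ G ∧ ∀ᵐ ω ∂P, φ p.1 ω ≤ (p.2 ω : EReal)}).NeBot →
    ∀ᵐ ω ∂P, φ a ω ≤ (s ω : EReal)

/-- The countable concatenation property of a subset `G` of an RN module. -/
def HasCC (G : Set E) : Prop :=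
  ∀ (x : ℕ → E), (∀ n, x n ∈ G) →
    ∀ (A : ℕ → Set Ω) (hA : ∀ n, MeasurableSet (A n)),
      (∀ i j, i ≠ j → Disjoint (A i) (A j)) → (⋃ n, A n) = univ →
        ∃ y ∈ G, ∀ n, N.smul (indL0 P (A n) (hA n)) y = N.smul (indL0 P (A n) (hA n)) (x n)

/-- The countable concatenation property of a subset of the product `L⁰(𝓕)`-module
`E × L⁰(𝓕)` (with componentwise module operations). -/
def HasCCProd (G : Set (E × L0 P)) : Prop :=
  ∀ (p : ℕ → E × L0 P), (∀ n, p n ∈ G) →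
    ∀ (A : ℕ → Set Ω) (hA : ∀ n, MeasurableSet (A n)),
      (∀ i j, i ≠ j → Disjoint (A i) (A j)) → (⋃ n, A n) = univ →
        ∃ q ∈ G, ∀ n,
          N.smul (indL0 P (A n) (hA n)) q.1 = N.smul (indL0 P (A n) (hA n)) (p n).1 ∧
          indL0 P (A n) (hA n) * q.2 = indL0 P (A n) (hA n) * (p n).2

/-- The local property of an `L̄⁰(𝓕)`-valued function:
`Ĩ_A·φ(x) = Ĩ_A·φ(Ĩ_A·x)` for all `x ∈ E`, `A ∈ 𝓕`, i.e. `φ(x) = φ(Ĩ_A x)` a.s. on `A`. -/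
def LocalProp (φ : E → L0e P) : Prop :=
  ∀ (x : E) (A : Set Ω) (hA : MeasurableSet A),
    ∀ᵐ ω ∂P, ω ∈ A → φ x ω = φ (N.smul (indL0 P A hA) x) ω

/-- `G` is `L⁰(𝓕)`-convex. -/
def L0Convex (G : Set E) : Prop :=
  ∀ x ∈ G, ∀ y ∈ G, ∀ ξ η : L0 P,
    (∀ᵐ ω ∂P, 0 ≤ ξ ω) → (∀ᵐ ω ∂P, 0 ≤ η ω) → ξ + η = 1 →
      N.smul ξ x + N.smul η y ∈ G

/-- `G` is a.s. bounded: `⋁{‖p‖ : p ∈ G} ∈ L⁰₊(𝓕)`. -/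
def ASBounded (G : Set E) : Prop :=
  ∃ ξ : L0 P, ∀ p ∈ G, ∀ᵐ ω ∂P, N.nm p ω ≤ ξ ω

/-- Membership in the random conjugate space `E*`: `f` is an a.s. bounded random linear
functional, i.e. an `L⁰(𝓕)`-linear map `f : E → L⁰(𝓕)` with `|f(x)| ≤ ξ·‖x‖` for all `x`
for some `ξ ∈ L⁰₊(𝓕)`. -/
def IsDual (f : E → L0 P) : Prop :=
  (∀ x y, f (x + y) = f x + f y) ∧
  (∀ (ξ : L0 P) (x : E), f (N.smul ξ x) = ξ * f x) ∧
  ∃ ξ : L0 P, (∀ᵐ ω ∂P, 0 ≤ ξ ω) ∧ ∀ x, ∀ᵐ ω ∂P, |f x ω| ≤ ξ ω * N.nm x ω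

/-- `nf = ‖f‖* := ⋀{ξ ∈ L⁰₊ : |f(x)| ≤ ξ‖x‖ for all x ∈ E}`, the random norm of `E*`. -/
def IsDualNorm (f : E → L0 P) (nf : L0 P) : Prop :=
  (∀ ξ : L0 P, ((∀ᵐ ω ∂P, 0 ≤ ξ ω) ∧ ∀ x, ∀ᵐ ω ∂P, |f x ω| ≤ ξ ω * N.nm x ω) →
    ∀ᵐ ω ∂P, nf ω ≤ ξ ω) ∧
  (∀ c : L0 P,
    (∀ ξ : L0 P, ((∀ᵐ ω ∂P, 0 ≤ ξ ω) ∧ ∀ x, ∀ᵐ ω ∂P, |f x ω| ≤ ξ ω * N.nm x ω) →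
      ∀ᵐ ω ∂P, c ω ≤ ξ ω) → ∀ᵐ ω ∂P, c ω ≤ nf ω)

/-- The cone `K(f,k) = {y ∈ E : k‖y‖ ≤ f(y)}`. -/
def Kcone (f : E → L0 P) (k : L0 P) : Set E := {y | ∀ᵐ ω ∂P, k ω * N.nm y ω ≤ f y ω}

/-- `f ∈ E*∖{0}`, bounded from above on `G`, supports `G` at some point:
`f(x) = ⋁f(G)` for some `x ∈ G`. -/
def Supports (G : Set E) (f : E → L0 P) : Prop :=
  N.IsDual f ∧ f ≠ 0 ∧ (∃ ξ : L0 P, ∀ x ∈ G, ∀ᵐ ω ∂P, f x ω ≤ ξ ω) ∧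
    ∃ x ∈ G, IsSupOnR f G (f x)

/-- The set of support points of `G`: points `x ∈ G` at which some
`f ∈ E*∖{0}`, bounded from above on `G`, attains `f(x) = ⋁f(G)`. -/
def SupportPoints (G : Set E) : Set E :=
  {x | x ∈ G ∧ ∃ f : E → L0 P, N.IsDual f ∧ f ≠ 0 ∧
    (∃ ξ : L0 P, ∀ y ∈ G, ∀ᵐ ω ∂P, f y ω ≤ ξ ω) ∧ IsSupOnR f G (f x)}

end RNModule


section CaristiAux

open scoped Topology

variable {P : Measure Ω} {E : Type*} [AddCommGroup E] (N : RNModule P E)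

lemma zero_smul' (x : E) : N.smul 0 x = 0 := by
  have h := N.add_smul 0 0 x
  rw [add_zero] at h
  exact left_eq_add.mp h

lemma smul_neg' (ξ : L0 P) (x : E) : N.smul ξ (-x) = -(N.smul ξ x) := by
  have h := N.smul_add ξ x (-x)
  rw [add_neg_cancel] at h
  have h0 : N.smul ξ (0 : E) = 0 := by
    have h2 := N.smul_add ξ 0 0
    rw [add_zero] at h2
    exact left_eq_add.mp h2
  rw [h0] at h
  exact (neg_eq_of_add_eq_zero_right h.symm).symm

lemma smul_sub' (ξ : L0 P) (x y : E) :
    N.smul ξ (x - y) = N.smul ξ x - N.smul ξ y := by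
  rw [sub_eq_add_neg, N.smul_add, smul_neg', sub_eq_add_neg]

lemma neg_one_smul' (x : E) : N.smul (-1) x = -x := by
  have h := N.add_smul 1 (-1) x
  rw [add_neg_cancel, zero_smul', N.one_smul] at h
  exact (neg_eq_of_add_eq_zero_right h.symm).symm

lemma nm_zero' : N.nm (0 : E) = 0 := (N.nm_eq_zero_iff 0).2 rfl

lemma nm_neg' (x : E) : N.nm (-x) = N.nm x := by
  rw [← neg_one_smul' N x]
  refine AEEqFun.ext ?_
  filter_upwards [N.nm_smul (-1) x, AEEqFun.coeFn_neg (1 : L0 P),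
    AEEqFun.coeFn_one (β := ℝ) (μ := P)] with ω h1 h2 h3
  rw [h1, h2]; simp [h3]

lemma nm_sub_comm' (x y : E) : N.nm (x - y) = N.nm (y - x) := by
  rw [← nm_neg' N (x - y), neg_sub]

lemma indL0_coe (A : Set Ω) (hA : MeasurableSet A) :
    (indL0 P A hA : Ω → ℝ) =ᵐ[P] A.indicator (fun _ => (1:ℝ)) :=
  AEEqFun.coeFn_mk _ _

lemma indL0_mul (A B : Set Ω) (hA : MeasurableSet A) (hB : MeasurableSet B) :
    indL0 P A hA * indL0 P B hB = indL0 P (A ∩ B) (hA.inter hB) := by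
  refine AEEqFun.ext ?_
  filter_upwards [AEEqFun.coeFn_mul (indL0 P A hA) (indL0 P B hB),
    indL0_coe A hA, indL0_coe B hB, indL0_coe (A ∩ B) (hA.inter hB)] with ω h1 h2 h3 h4
  rw [h1, h4]
  simp only [Pi.mul_apply, h2, h3]
  by_cases hw1 : ω ∈ A <;> by_cases hw2 : ω ∈ B <;>
    simp [Set.indicator_apply, hw1, hw2]

/-- norm of an indicator-localized vector -/
lemma nm_ind (A : Set Ω) (hA : MeasurableSet A) (v : E) :
    ∀ᵐ ω ∂P, N.nm (N.smul (indL0 P A hA) v) ω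
      = A.indicator (fun _ => (1:ℝ)) ω * N.nm v ω := by
  filter_upwards [N.nm_smul (indL0 P A hA) v, indL0_coe A hA] with ω h1 h2
  rw [h1, h2]
  by_cases hw : ω ∈ A <;> simp [Set.indicator_apply, hw]

lemma nm_eq_on {a b : E} {A : Set Ω} (hA : MeasurableSet A)
    (h : N.smul (indL0 P A hA) a = N.smul (indL0 P A hA) b) :
    ∀ᵐ ω ∂P, ω ∈ A → N.nm a ω = N.nm b ω := by
  filter_upwards [nm_ind N A hA a, nm_ind N A hA b] with ω h1 h2 hw
  have : N.nm (N.smul (indL0 P A hA) a) ω = N.nm (N.smul (indL0 P A hA) b) ω := by rw [h]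
  rw [h1, h2] at this
  simpa [Set.indicator_of_mem hw] using this

lemma phi_eq_on (φ : E → L0e P) (hloc : N.LocalProp φ) {a b : E} {A : Set Ω}
    (hA : MeasurableSet A)
    (h : N.smul (indL0 P A hA) a = N.smul (indL0 P A hA) b) :
    ∀ᵐ ω ∂P, ω ∈ A → φ a ω = φ b ω := by
  filter_upwards [hloc a A hA, hloc b A hA] with ω h1 h2 hw
  rw [h1 hw, h2 hw, h]

lemma smul_ind_sub {a b : E} {A : Set Ω} (hA : MeasurableSet A)
    (h : N.smul (indL0 P A hA) a = N.smul (indL0 P A hA) b) (v : E) :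
    N.smul (indL0 P A hA) (a - v) = N.smul (indL0 P A hA) (b - v) := by
  rw [smul_sub', smul_sub', h]

lemma smul_ind_inter {a b : E} {A : Set Ω} (hA : MeasurableSet A)
    (h : N.smul (indL0 P A hA) a = N.smul (indL0 P A hA) b)
    (S : Set Ω) (hS : MeasurableSet S) :
    N.smul (indL0 P (S ∩ A) (hS.inter hA)) a = N.smul (indL0 P (S ∩ A) (hS.inter hA)) b := by
  rw [← indL0_mul S A hS hA, N.mul_smul, N.mul_smul, h]

/-- The Brøndsted-type order associated with `φ`. -/
def CLe {P : Measure Ω} {E : Type*} [AddCommGroup E] (N : RNModule P E)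
    (φ : E → L0e P) (x y : E) : Prop :=
  ∀ᵐ ω ∂P, φ x ω + (N.nm (x - y) ω : EReal) ≤ φ y ω

lemma cle_refl (φ : E → L0e P) (x : E) : CLe N φ x x := by
  have h0 : N.nm (x - x) = 0 := by rw [sub_self, nm_zero']
  filter_upwards [h0 ▸ AEEqFun.coeFn_zero (β := ℝ) (μ := P)] with ω h
  rw [h]; simp

lemma cle_trans (φ : E → L0e P) {x y z : E} (h1 : CLe N φ x y) (h2 : CLe N φ y z) :
    CLe N φ x z := by
  filter_upwards [h1, h2, N.nm_add_le (x - y) (y - z)] with ω a b c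
  rw [sub_add_sub_cancel] at c
  calc φ x ω + (N.nm (x - z) ω : EReal)
      ≤ φ x ω + ((N.nm (x - y) ω + N.nm (y - z) ω : ℝ) : EReal) :=
        add_le_add le_rfl (EReal.coe_le_coe_iff.2 c)
    _ = (φ x ω + (N.nm (x - y) ω : EReal)) + (N.nm (y - z) ω : EReal) := by
        rw [EReal.coe_add, add_assoc]
    _ ≤ φ y ω + (N.nm (y - z) ω : EReal) := add_le_add a le_rfl
    _ ≤ φ z ω := b

lemma cle_phi_mono (φ : E → L0e P) {x y : E} (h : CLe N φ x y) :
    ∀ᵐ ω ∂P, φ x ω ≤ φ y ω := by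
  filter_upwards [h, N.nm_nonneg (x - y)] with ω a b
  refine le_trans ?_ a
  exact le_add_of_nonneg_right (EReal.coe_nonneg.2 b)

/-- Repair a countable family of measurable sets into a measurable partition of `univ`,
  dumping the uncovered part into the index-0 piece. -/
def fixPart (C : ℕ → Set Ω) : ℕ → Set Ω :=
  fun k => disjointed C k ∪ (if k = 0 then (⋃ j, C j)ᶜ else ∅)

lemma fixPart_meas {C : ℕ → Set Ω} (hC : ∀ k, MeasurableSet (C k)) (k : ℕ) :
    MeasurableSet (fixPart C k) := by
  refine (MeasurableSet.disjointed hC k).union ?_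
  split_ifs
  · exact (MeasurableSet.iUnion hC).compl
  · exact MeasurableSet.empty

lemma fixPart_disj (C : ℕ → Set Ω) : ∀ i j, i ≠ j → Disjoint (fixPart C i) (fixPart C j) := by
  intro i j hij
  have hd : Disjoint (disjointed C i) (disjointed C j) := disjoint_disjointed C hij
  have hsub : ∀ k, disjointed C k ⊆ ⋃ l, C l := fun k =>
    (disjointed_subset C k).trans (subset_iUnion C k)
  unfold fixPart
  split_ifs with h1 h2 h2
  · exact absurd (h1.trans h2.symm) hij
  · simp only [union_empty]
    refine Disjoint.union_left hd ?_
    exact (disjoint_compl_left.mono_right (hsub j)).symm.symm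
  · simp only [union_empty]
    refine Disjoint.union_right hd ?_
    exact (disjoint_compl_left.mono_right (hsub i)).symm
  · simp only [union_empty]; exact hd

lemma fixPart_cover (C : ℕ → Set Ω) : (⋃ k, fixPart C k) = univ := by
  apply eq_univ_of_forall
  intro ω
  by_cases h : ω ∈ ⋃ j, C j
  · rw [← iUnion_disjointed] at h
    obtain ⟨k, hk⟩ := mem_iUnion.mp h
    exact mem_iUnion.mpr ⟨k, Or.inl hk⟩
  · refine mem_iUnion.mpr ⟨0, Or.inr ?_⟩
    rw [if_pos rfl]
    exact h

lemma fixPart_sub (C : ℕ → Set Ω) (k : ℕ) :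
    fixPart C k ⊆ C k ∪ (⋃ j, C j)ᶜ := by
  unfold fixPart
  split_ifs
  · exact union_subset_union_left _ (disjointed_subset C k)
  · rw [union_empty]; exact (disjointed_subset C k).trans subset_union_left

/-- Existence of gluings along countable measurable partitions. -/
lemma glue_exists (hCC : N.HasCC Set.univ) (y : ℕ → E) (B : ℕ → Set Ω)
    (hB : ∀ n, MeasurableSet (B n)) (hd : ∀ i j, i ≠ j → Disjoint (B i) (B j))
    (hc : (⋃ n, B n) = univ) :
    ∃ z : E, ∀ n, N.smul (indL0 P (B n) (hB n)) z = N.smul (indL0 P (B n) (hB n)) (y n) := by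
  obtain ⟨z, -, hz⟩ := hCC y (fun n => mem_univ _) B hB hd hc
  exact ⟨z, hz⟩

/-- Pointwise a.e. description of a gluing. -/
lemma glue_ae (φ : E → L0e P) (hloc : N.LocalProp φ) {z : E} {y : ℕ → E} {B : ℕ → Set Ω}
    (hB : ∀ n, MeasurableSet (B n)) (hc : (⋃ n, B n) = univ)
    (hz : ∀ n, N.smul (indL0 P (B n) (hB n)) z = N.smul (indL0 P (B n) (hB n)) (y n))
    (v : E) :
    ∀ᵐ ω ∂P, ∃ n, ω ∈ B n ∧ φ z ω = φ (y n) ω ∧ N.nm (z - v) ω = N.nm (y n - v) ω := by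
  have h1 : ∀ n, ∀ᵐ ω ∂P, ω ∈ B n →
      (φ z ω = φ (y n) ω ∧ N.nm (z - v) ω = N.nm (y n - v) ω) := by
    intro n
    filter_upwards [phi_eq_on N φ hloc (hB n) (hz n),
      nm_eq_on N (hB n) (smul_ind_sub N (hB n) (hz n) v)] with ω a b hw
    exact ⟨a hw, b hw⟩
  filter_upwards [ae_all_iff.2 h1] with ω hω
  have : ω ∈ ⋃ n, B n := hc ▸ mem_univ ω
  obtain ⟨n, hn⟩ := mem_iUnion.mp this
  exact ⟨n, hn, hω n hn⟩

/-- Gluing two vectors along a measurable set. -/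
lemma exists_min_aux (hCC : N.HasCC Set.univ) (φ : E → L0e P) (hloc : N.LocalProp φ)
    (y w : E) (A : Set Ω) (hAm : MeasurableSet A) :
    ∃ m : E, ∀ v : E, ∀ᵐ ω ∂P,
      (ω ∈ A → (φ m ω = φ y ω ∧ N.nm (m - v) ω = N.nm (y - v) ω)) ∧
      (ω ∉ A → (φ m ω = φ w ω ∧ N.nm (m - v) ω = N.nm (w - v) ω)) := by
  classical
  have hBm : ∀ n : ℕ, MeasurableSet (if n = 0 then A else if n = 1 then Aᶜ else ∅) := by
    intro n
    split_ifs
    · exact hAm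
    · exact hAm.compl
    · exact MeasurableSet.empty
  have hBd : ∀ i j, i ≠ j →
      Disjoint (if i = 0 then A else if i = 1 then Aᶜ else ∅)
        (if j = 0 then A else if j = 1 then Aᶜ else ∅) := by
    intro i j hij
    split_ifs <;> simp_all [disjoint_compl_right, disjoint_compl_left]
  have hBc : (⋃ n : ℕ, (if n = 0 then A else if n = 1 then Aᶜ else ∅)) = univ := by
    apply eq_univ_of_forall
    intro ω
    by_cases h : ω ∈ A
    · exact mem_iUnion.mpr ⟨0, by simp [h]⟩
    · exact mem_iUnion.mpr ⟨1, by simp [h]⟩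
  obtain ⟨m, hm⟩ := glue_exists N hCC (fun n => if n = 0 then y else w) _ hBm hBd hBc
  refine ⟨m, fun v => ?_⟩
  filter_upwards [glue_ae N φ hloc hBm hBc hm v] with ω hω
  obtain ⟨n, hn, h1, h2⟩ := hω
  match n with
  | 0 =>
    have hA : ω ∈ A := by simpa using hn
    exact ⟨fun _ => ⟨by simpa using h1, by simpa using h2⟩, fun h => absurd hA h⟩
  | 1 =>
    have hA : ω ∉ A := by simpa using hn
    exact ⟨fun h => absurd h hA, fun _ => ⟨by simpa using h1, by simpa using h2⟩⟩
  | (k+2) => simp at hn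

/-- The `L⁰`-lattice binary minimum of `φ`-values, realized by gluing. -/
lemma exists_min (hCC : N.HasCC Set.univ) (φ : E → L0e P) (hloc : N.LocalProp φ)
    (y w : E) :
    ∃ m : E, ∀ v : E, ∀ᵐ ω ∂P,
      (φ m ω = φ y ω ∧ φ y ω ≤ φ w ω ∧ N.nm (m - v) ω = N.nm (y - v) ω) ∨
      (φ m ω = φ w ω ∧ φ w ω ≤ φ y ω ∧ N.nm (m - v) ω = N.nm (w - v) ω) := by
  have hy := (φ y).aemeasurable
  have hw := (φ w).aemeasurable
  have hAm : MeasurableSet {ω | hy.mk _ ω ≤ hw.mk _ ω} :=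
    measurableSet_le hy.measurable_mk hw.measurable_mk
  obtain ⟨m, hm⟩ := exists_min_aux N hCC φ hloc y w _ hAm
  refine ⟨m, fun v => ?_⟩
  filter_upwards [hm v, hy.ae_eq_mk, hw.ae_eq_mk] with ω hω ey ew
  by_cases h : ω ∈ {ω | hy.mk _ ω ≤ hw.mk _ ω}
  · obtain ⟨h1, h2⟩ := hω.1 h
    exact Or.inl ⟨h1, by rw [ey, ew]; exact h, h2⟩
  · obtain ⟨h1, h2⟩ := hω.2 h
    exact Or.inr ⟨h1, by rw [ey, ew]; exact le_of_not_ge h, h2⟩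

lemma indL0_congr {A B : Set Ω} (hA : MeasurableSet A) (hB : MeasurableSet B)
    (h : A = B) : indL0 P A hA = indL0 P B hB := by subst h; rfl

/-- `z` is glued from the tail of the sequence `x` subordinately to `ε`. -/
def Subord (N : RNModule P E) (x : ℕ → E) (ε : L0 P) (z : E) : Prop :=
  ∃ (B : ℕ → Set Ω) (hB : ∀ n, MeasurableSet (B n)),
    (∀ i j, i ≠ j → Disjoint (B i) (B j)) ∧ (⋃ n, B n) = univ ∧
    (∀ n, N.smul (indL0 P (B n) (hB n)) z = N.smul (indL0 P (B n) (hB n)) (x (n+1))) ∧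
    (∀ n, ∀ᵐ ω ∂P, ω ∈ B n → ((1:ℝ)/2)^n ≤ ε ω)

lemma subord_mono {x : ℕ → E} {δ ε : L0 P} {z : E} (h : ∀ᵐ ω ∂P, δ ω ≤ ε ω)
    (hz : Subord N x δ z) : Subord N x ε z := by
  obtain ⟨B, hB, h1, h2, h3, h4⟩ := hz
  refine ⟨B, hB, h1, h2, h3, fun n => ?_⟩
  filter_upwards [h4 n, h] with ω a b hw
  exact (a hw).trans b

lemma subord_nonempty (hCC : N.HasCC Set.univ) (x : ℕ → E) {ε : L0 P}
    (hε : ε ∈ L0pp P) : ∃ z, Subord N x ε z := by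
  have he := ε.aemeasurable
  set C : ℕ → Set Ω := fun n => {ω | ((1:ℝ)/2)^n ≤ he.mk _ ω} with hCdef
  have hCm : ∀ n, MeasurableSet (C n) :=
    fun n => measurableSet_le measurable_const he.measurable_mk
  obtain ⟨z, hz⟩ := glue_exists N hCC (fun n => x (n+1)) (fixPart C)
    (fixPart_meas hCm) (fixPart_disj C) (fixPart_cover C)
  refine ⟨z, fixPart C, fixPart_meas hCm, fixPart_disj C, fixPart_cover C, hz, fun n => ?_⟩
  have hcov : ∀ᵐ ω ∂P, ω ∈ ⋃ j, C j := by
    filter_upwards [hε, he.ae_eq_mk] with ω h0 hmk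
    rw [hmk] at h0
    obtain ⟨k, hk⟩ := exists_pow_lt_of_lt_one h0 (by norm_num : (1:ℝ)/2 < 1)
    exact mem_iUnion.mpr ⟨k, le_of_lt hk⟩
  filter_upwards [hcov, he.ae_eq_mk] with ω h0 hmk hw
  have := fixPart_sub C n hw
  rcases this with h | h
  · rw [hmk]; exact h
  · exact absurd h0 h

/-- Pointwise a.e. description of a subordinate gluing. -/
lemma subord_ae (φ : E → L0e P) (hloc : N.LocalProp φ) {x : ℕ → E} {ε : L0 P} {z : E}
    (hz : Subord N x ε z) (v : E) :
    ∀ᵐ ω ∂P, ∃ m, ((1:ℝ)/2)^m ≤ ε ω ∧ φ z ω = φ (x (m+1)) ω ∧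
      N.nm (z - v) ω = N.nm (x (m+1) - v) ω := by
  obtain ⟨B, hB, h1, h2, h3, h4⟩ := hz
  filter_upwards [glue_ae N φ hloc hB h2 h3 v, ae_all_iff.2 h4] with ω hω h4ω
  obtain ⟨m, hm, e1, e2⟩ := hω
  exact ⟨m, h4ω m hm, e1, e2⟩

/-- Two gluings subordinate to the same `ε` are `ε`-close. -/
lemma subord_pair {x : ℕ → E}
    (hK : ∀ n m, ∀ᵐ ω ∂P, N.nm (x (n+1) - x (m+1)) ω ≤ ((1:ℝ)/2)^(min n m))
    {ε : L0 P} {z z' : E} (hz : Subord N x ε z) (hz' : Subord N x ε z') :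
    ∀ᵐ ω ∂P, N.nm (z - z') ω ≤ ε ω := by
  obtain ⟨B, hB, h1, h2, h3, h4⟩ := hz
  obtain ⟨B', hB', h1', h2', h3', h4'⟩ := hz'
  have key : ∀ n m, ∀ᵐ ω ∂P, ω ∈ B n ∩ B' m →
      N.nm (z - z') ω = N.nm (x (n+1) - x (m+1)) ω := by
    intro n m
    have hS : MeasurableSet (B n ∩ B' m) := (hB n).inter (hB' m)
    have e1 : N.smul (indL0 P (B n ∩ B' m) hS) z
        = N.smul (indL0 P (B n ∩ B' m) hS) (x (n+1)) := by
      have := smul_ind_inter N (hB n) (h3 n) (B' m) (hB' m)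
      rwa [indL0_congr ((hB' m).inter (hB n)) hS (inter_comm _ _)] at this
    have e2 : N.smul (indL0 P (B n ∩ B' m) hS) z'
        = N.smul (indL0 P (B n ∩ B' m) hS) (x (m+1)) :=
      smul_ind_inter N (hB' m) (h3' m) (B n) (hB n)
    have e3 : N.smul (indL0 P (B n ∩ B' m) hS) (z - z')
        = N.smul (indL0 P (B n ∩ B' m) hS) (x (n+1) - x (m+1)) := by
      rw [smul_sub', smul_sub', e1, e2]
    have := nm_eq_on N hS e3
    filter_upwards [this] with ω h hw
    simpa [sub_sub_sub_cancel_right] using h hw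
  have hKae := ae_all_iff.2 fun n => ae_all_iff.2 fun m => hK n m
  have hkeyae := ae_all_iff.2 fun n => ae_all_iff.2 fun m => key n m
  have h4ae := ae_all_iff.2 h4
  have h4'ae := ae_all_iff.2 h4'
  filter_upwards [hKae, hkeyae, h4ae, h4'ae] with ω hKω hkω h4ω h4'ω
  have hBn : ω ∈ ⋃ n, B n := h2 ▸ mem_univ ω
  have hBm : ω ∈ ⋃ m, B' m := h2' ▸ mem_univ ω
  obtain ⟨n, hn⟩ := mem_iUnion.mp hBn
  obtain ⟨m, hm⟩ := mem_iUnion.mp hBm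
  rw [hkω n m ⟨hn, hm⟩]
  refine (hKω n m).trans ?_
  rcases le_total n m with h | h
  · rw [min_eq_left h]; exact h4ω n hn
  · rw [min_eq_right h]; exact h4'ω m hm

/-- Near-attainment of the essential infimum of `φ` on the lower set of `x`. -/
lemma exists_approx [IsProbabilityMeasure P] (hCC : N.HasCC Set.univ) (φ : E → L0e P)
    (hloc : N.LocalProp φ)
    (ξ : L0 P) (hξ : ∀ y : E, ∀ᵐ ω ∂P, (ξ ω : EReal) ≤ φ y ω)
    (x : E) (hx : ∀ᵐ ω ∂P, φ x ω < ⊤) (δ : ℝ) (hδ : 0 < δ) :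
    ∃ x', CLe N φ x' x ∧
      ∀ y, CLe N φ y x → ∀ᵐ ω ∂P, φ x' ω ≤ φ y ω + (δ : EReal) := by
  classical
  -- finiteness of φ on the lower set
  have hreal : ∀ y, CLe N φ y x → ∀ᵐ ω ∂P, φ y ω ≠ ⊥ ∧ φ y ω ≠ ⊤ := by
    intro y hy
    filter_upwards [hξ y, cle_phi_mono N φ hy, hx] with ω a b c
    exact ⟨(lt_of_lt_of_le (EReal.bot_lt_coe _) a).ne', (lt_of_le_of_lt b c).ne⟩
  -- the scalarizing functional
  set J : E → ℝ := fun y => ∫ ω, Real.arctan ((φ y ω).toReal) ∂P with hJdef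
  have hJm : ∀ y : E, AEStronglyMeasurable (fun ω => Real.arctan ((φ y ω).toReal)) P :=
    fun y => ((Real.continuous_arctan.measurable.comp measurable_ereal_toReal).comp_aemeasurable
      (φ y).aemeasurable).aestronglyMeasurable
  have harctan_bdd : ∀ t : ℝ, |Real.arctan t| ≤ 2 := by
    intro t
    have h1 := Real.arctan_lt_pi_div_two t
    have h2 := Real.neg_pi_div_two_lt_arctan t
    have := Real.pi_lt_d2
    rw [abs_le]; constructor <;> nlinarith
  have hJint : ∀ y : E, Integrable (fun ω => Real.arctan ((φ y ω).toReal)) P := by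
    intro y
    refine ⟨hJm y, (hasFiniteIntegral_const (2:ℝ)).mono' ?_⟩
    filter_upwards with ω using by simpa using harctan_bdd _
  have hJmono : ∀ y w : E, (∀ᵐ ω ∂P, φ y ω ≤ φ w ω) → (∀ᵐ ω ∂P, φ y ω ≠ ⊥) →
      (∀ᵐ ω ∂P, φ w ω ≠ ⊤) → J y ≤ J w := by
    intro y w h hb ht
    refine integral_mono_ae (hJint y) (hJint w) ?_
    filter_upwards [h, hb, ht] with ω a b c
    exact Real.arctan_strictMono.monotone (EReal.toReal_le_toReal a b c)
  have hJlb : ∀ y : E, -2 ≤ J y := by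
    intro y
    have : ∫ (_ : Ω), (-2 : ℝ) ∂P ≤ J y := by
      refine integral_mono_ae (integrable_const _) (hJint y) ?_
      filter_upwards with ω
      have := harctan_bdd ((φ y ω).toReal)
      rw [abs_le] at this; exact this.1
    simpa using this
  set S : Set E := {y | CLe N φ y x} with hSdef
  have hxS : x ∈ S := cle_refl N φ x
  have hne : (J '' S).Nonempty := ⟨J x, x, hxS, rfl⟩
  have hbddb : BddBelow (J '' S) := ⟨-2, by rintro a ⟨y, -, rfl⟩; exact hJlb y⟩
  -- near-infimum selection
  have hsel : ∀ k : ℕ, ∃ y, y ∈ S ∧ J y < sInf (J '' S) + 1/(k+1) := by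
    intro k
    have hpos : (0:ℝ) < 1/(k+1) := by positivity
    obtain ⟨a, ⟨y, hyS, rfl⟩, ha⟩ := exists_lt_of_csInf_lt hne (lt_add_of_pos_right _ hpos)
    exact ⟨y, hyS, ha⟩
  choose g hgS hgJ using hsel
  choose m2 hm2 using fun a b => exists_min N hCC φ hloc a b
  have hm2S : ∀ a b : E, a ∈ S → b ∈ S → m2 a b ∈ S := by
    intro a b ha hb
    show CLe N φ (m2 a b) x
    filter_upwards [hm2 a b x, ha, hb] with ω h hA hB
    rcases h with ⟨e1, -, e2⟩ | ⟨e1, -, e2⟩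
    · rw [e1, e2]; exact hA
    · rw [e1, e2]; exact hB
  have hm2le : ∀ a b : E, ∀ᵐ ω ∂P, φ (m2 a b) ω ≤ φ a ω ∧ φ (m2 a b) ω ≤ φ b ω := by
    intro a b
    filter_upwards [hm2 a b 0] with ω h
    rcases h with ⟨e1, hle, -⟩ | ⟨e1, hle, -⟩
    · exact ⟨le_of_eq e1, e1 ▸ hle⟩
    · exact ⟨e1 ▸ hle, le_of_eq e1⟩
  -- the decreasing minimizing sequence
  set Y : ℕ → E := fun k => Nat.rec (g 0) (fun k yk => m2 yk (g (k+1))) k with hYdef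
  have hYs : ∀ k, Y (k+1) = m2 (Y k) (g (k+1)) := fun k => rfl
  have hYS : ∀ k, Y k ∈ S := by
    intro k
    induction k with
    | zero => exact hgS 0
    | succ k ih => rw [hYs k]; exact hm2S _ _ ih (hgS (k+1))
  have hYmono : ∀ k, ∀ᵐ ω ∂P, φ (Y (k+1)) ω ≤ φ (Y k) ω := by
    intro k
    filter_upwards [hm2le (Y k) (g (k+1))] with ω h using (hYs k ▸ h.1)
  have hYJ : ∀ k, J (Y k) < sInf (J '' S) + 1/(k+1) := by
    intro k
    cases k with
    | zero => exact hgJ 0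
    | succ k =>
      refine lt_of_le_of_lt ?_ (hgJ (k+1))
      refine hJmono _ _ ?_ ?_ ?_
      · filter_upwards [hm2le (Y k) (g (k+1))] with ω h using (hYs k ▸ h.2)
      · filter_upwards [hreal _ (hYS (k+1))] with ω h using h.1
      · filter_upwards [hreal _ (hgS (k+1))] with ω h using h.2
  have hYlb : ∀ k, sInf (J '' S) ≤ J (Y k) := fun k => csInf_le hbddb ⟨Y k, hYS k, rfl⟩
  -- measurable real representatives
  have hYme : ∀ k, AEMeasurable (φ (Y k) : Ω → EReal) P := fun k => (φ (Y k)).aemeasurable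
  set Fr : ℕ → Ω → ℝ := fun k ω => ((hYme k).mk _ ω).toReal with hFrdef
  have hFrm : ∀ k, Measurable (Fr k) :=
    fun k => measurable_ereal_toReal.comp (hYme k).measurable_mk
  have hFr : ∀ k, ∀ᵐ ω ∂P, ((Fr k ω : ℝ) : EReal) = φ (Y k) ω := by
    intro k
    filter_upwards [(hYme k).ae_eq_mk, hreal _ (hYS k)] with ω h hr
    rw [hFrdef]; dsimp only
    rw [← h, EReal.coe_toReal (h ▸ hr.2) (h ▸ hr.1)]
  set LE : Ω → EReal := fun ω => ⨅ k, ((Fr k ω : ℝ) : EReal) with hLEdef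
  have hLEm : Measurable LE :=
    Measurable.iInf (fun k => measurable_coe_real_ereal.comp (hFrm k))
  set Lr : Ω → ℝ := fun ω => (LE ω).toReal with hLrdef
  have hLrm : Measurable Lr := measurable_ereal_toReal.comp hLEm
  have hA1 : ∀ᵐ ω ∂P, ∀ k, ((Fr k ω : ℝ) : EReal) = φ (Y k) ω := ae_all_iff.2 hFr
  have hA2 : ∀ᵐ ω ∂P, ∀ k, Fr (k+1) ω ≤ Fr k ω := by
    rw [ae_all_iff]
    intro k
    filter_upwards [hFr k, hFr (k+1), hYmono k] with ω a b c
    exact EReal.coe_le_coe_iff.1 (by rw [a, b]; exact c)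
  have hA3 : ∀ᵐ ω ∂P, ∀ k, ξ ω ≤ Fr k ω := by
    rw [ae_all_iff]
    intro k
    filter_upwards [hFr k, hξ (Y k)] with ω a b
    exact EReal.coe_le_coe_iff.1 (by rw [a]; exact b)
  have hA4 : ∀ᵐ ω ∂P, (⨅ k, ((Fr k ω : ℝ) : EReal)) = ((Lr ω : ℝ) : EReal) ∧
      ∀ k, Lr ω ≤ Fr k ω := by
    filter_upwards [hA3] with ω h3
    have hb : ((ξ ω : ℝ) : EReal) ≤ ⨅ k, ((Fr k ω : ℝ) : EReal) :=
      le_iInf fun k => EReal.coe_le_coe_iff.2 (h3 k)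
    have hnb : (⨅ k, ((Fr k ω : ℝ) : EReal)) ≠ ⊥ :=
      (lt_of_lt_of_le (EReal.bot_lt_coe _) hb).ne'
    have hnt : (⨅ k, ((Fr k ω : ℝ) : EReal)) ≠ ⊤ :=
      (lt_of_le_of_lt (iInf_le (fun k => ((Fr k ω : ℝ) : EReal)) 0) (EReal.coe_lt_top _)).ne
    have hLr : Lr ω = (⨅ k, ((Fr k ω : ℝ) : EReal)).toReal := by
      rw [hLrdef]
    refine ⟨by rw [hLr, EReal.coe_toReal hnt hnb], fun k => ?_⟩
    have hle : (⨅ k, ((Fr k ω : ℝ) : EReal)) ≤ ((Fr k ω : ℝ) : EReal) :=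
      iInf_le (fun k => ((Fr k ω : ℝ) : EReal)) k
    rw [hLr]
    simpa [EReal.toReal_coe] using EReal.toReal_le_toReal hle hnb (EReal.coe_ne_top _)
  have hA5 : ∀ᵐ ω ∂P, Tendsto (fun k => Fr k ω) atTop (𝓝 (Lr ω)) := by
    filter_upwards [hA2, hA4] with ω h2 h4
    rw [Metric.tendsto_atTop]
    intro ζ hζ
    have hlt : (⨅ k, ((Fr k ω : ℝ) : EReal)) < ((Lr ω + ζ : ℝ) : EReal) := by
      rw [h4.1]; exact_mod_cast lt_add_of_pos_right _ hζ
    obtain ⟨NN, hNN⟩ := iInf_lt_iff.1 hlt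
    refine ⟨NN, fun n hn => ?_⟩
    have hanti : Fr n ω ≤ Fr NN ω := by
      clear hNN
      induction n with
      | zero => simpa [Nat.le_zero.1 hn] using le_refl _
      | succ n ih =>
        rcases Nat.lt_or_ge NN (n+1) with h | h
        · exact le_trans (h2 n) (ih (Nat.lt_succ_iff.1 h))
        · rw [le_antisymm hn h]
    have h1 : Fr n ω < Lr ω + ζ :=
      lt_of_le_of_lt hanti (EReal.coe_lt_coe_iff.1 hNN)
    have h2' : Lr ω ≤ Fr n ω := h4.2 n
    rw [Real.dist_eq, abs_lt]
    constructor <;> linarith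
  -- Fatou step: Lr is an a.e. lower bound of φ on S
  have hFatou : ∀ y, y ∈ S → ∀ᵐ ω ∂P, ((Lr ω : ℝ) : EReal) ≤ φ y ω := by
    intro y hyS
    have hyme : AEMeasurable (φ y : Ω → EReal) P := (φ y).aemeasurable
    set Gy : Ω → ℝ := fun ω => (hyme.mk _ ω).toReal with hGydef
    have hGym : Measurable Gy := measurable_ereal_toReal.comp hyme.measurable_mk
    have hGy : ∀ᵐ ω ∂P, ((Gy ω : ℝ) : EReal) = φ y ω := by
      filter_upwards [hyme.ae_eq_mk, hreal _ hyS] with ω h hr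
      rw [hGydef]; dsimp only
      rw [← h, EReal.coe_toReal (h ▸ hr.2) (h ▸ hr.1)]
    -- the defect integrands
    set h' : ℕ → Ω → ℝ := fun k ω =>
      Real.arctan ((φ (Y k) ω).toReal) - Real.arctan ((φ (m2 (Y k) y) ω).toReal) with hh'def
    have hmink : ∀ k, ∀ᵐ ω ∂P,
        Real.arctan ((φ (m2 (Y k) y) ω).toReal)
          = min (Real.arctan (Fr k ω)) (Real.arctan (Gy ω)) := by
      intro k
      filter_upwards [hm2 (Y k) y 0, hFr k, hGy, hreal _ (hYS k), hreal _ hyS]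
        with ω hc a b hr1 hr2
      rcases hc with ⟨e1, hle, -⟩ | ⟨e1, hle, -⟩
      · rw [e1, ← a, EReal.toReal_coe]
        have : Fr k ω ≤ Gy ω := by
          rw [← EReal.coe_le_coe_iff, a, b]; exact hle
        rw [min_eq_left (Real.arctan_strictMono.monotone this)]
      · rw [e1, ← b, EReal.toReal_coe]
        have : Gy ω ≤ Fr k ω := by
          rw [← EReal.coe_le_coe_iff, a, b]; exact hle
        rw [min_eq_right (Real.arctan_strictMono.monotone this)]
    have hm2yS : ∀ k, m2 (Y k) y ∈ S := fun k => hm2S _ _ (hYS k) hyS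
    have hint1 : ∀ k, Integrable (fun ω => Real.arctan ((φ (Y k) ω).toReal)) P := fun k => hJint _
    have hint2 : ∀ k, Integrable (fun ω => Real.arctan ((φ (m2 (Y k) y) ω).toReal)) P :=
      fun k => hJint _
    have hh'int : ∀ k, Integrable (h' k) P := fun k => (hint1 k).sub (hint2 k)
    have hh'le : ∀ k, ∫ ω, h' k ω ∂P ≤ 1/(k+1) := by
      intro k
      have : ∫ ω, h' k ω ∂P = J (Y k) - J (m2 (Y k) y) := integral_sub (hint1 k) (hint2 k)
      rw [this]
      have h1 := hYJ k
      have h2 : sInf (J '' S) ≤ J (m2 (Y k) y) := csInf_le hbddb ⟨_, hm2yS k, rfl⟩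
      linarith
    have hh'nonneg : ∀ k, 0 ≤ᵐ[P] h' k := by
      intro k
      filter_upwards [hmink k, hFr k] with ω hm a
      rw [hh'def]; dsimp only
      rw [hm, ← a, EReal.toReal_coe]
      simp [min_le_left]
    -- dominated convergence
    set G : Ω → ℝ := fun ω => max (Real.arctan (Lr ω) - Real.arctan (Gy ω)) 0 with hGdef
    have hGm : Measurable G :=
      (((Real.continuous_arctan.measurable.comp hLrm).sub
        (Real.continuous_arctan.measurable.comp hGym)).max measurable_const)
    have htend : Tendsto (fun k => ∫ ω, h' k ω ∂P) atTop (𝓝 (∫ ω, G ω ∂P)) := by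
      refine tendsto_integral_of_dominated_convergence (fun _ => 4)
        (fun k => ((hint1 k).sub (hint2 k)).aestronglyMeasurable) (integrable_const _) ?_ ?_
      · intro k
        filter_upwards with ω
        rw [hh'def]; dsimp only
        have b1 := harctan_bdd ((φ (Y k) ω).toReal)
        have b2 := harctan_bdd ((φ (m2 (Y k) y) ω).toReal)
        rw [abs_le] at b1 b2
        rw [Real.norm_eq_abs, abs_le]
        constructor <;> [linarith [b1.1, b2.2]; linarith [b1.2, b2.1]]
      · filter_upwards [ae_all_iff.2 hmink, ae_all_iff.2 hFr, hA5] with ω hm a h5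
        have heq : ∀ k, h' k ω
            = max (Real.arctan (Fr k ω) - Real.arctan (Gy ω)) 0 := by
          intro k
          rw [hh'def]; dsimp only
          rw [hm k, ← a k, EReal.toReal_coe]
          rcases le_total (Real.arctan (Fr k ω)) (Real.arctan (Gy ω)) with h | h
          · rw [min_eq_left h, max_eq_right (by linarith)]; ring
          · rw [min_eq_right h, max_eq_left (by linarith)]
        simp only [heq, hGdef]
        exact ((Real.continuous_arctan.continuousAt.tendsto.comp h5).sub_const _).max
          tendsto_const_nhds
    have hzero : Tendsto (fun k : ℕ => ∫ ω, h' k ω ∂P) atTop (𝓝 0) := by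
      refine tendsto_of_tendsto_of_tendsto_of_le_of_le tendsto_const_nhds
        tendsto_one_div_add_atTop_nhds_zero_nat
        (fun k => integral_nonneg_of_ae (hh'nonneg k)) hh'le
    have hGzero : ∫ ω, G ω ∂P = 0 := tendsto_nhds_unique htend hzero
    have hGint : Integrable G P := by
      refine ⟨hGm.aestronglyMeasurable, (hasFiniteIntegral_const (4:ℝ)).mono' ?_⟩
      filter_upwards with ω
      rw [hGdef]; dsimp only
      have b1 := harctan_bdd (Lr ω)
      have b2 := harctan_bdd (Gy ω)
      rw [abs_le] at b1 b2
      rw [Real.norm_eq_abs, abs_le]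
      constructor
      · linarith [le_max_right (Real.arctan (Lr ω) - Real.arctan (Gy ω)) (0:ℝ)]
      · rw [max_le_iff]; constructor <;> linarith
    have hG0 : G =ᵐ[P] 0 :=
      (integral_eq_zero_iff_of_nonneg_ae
        (by filter_upwards with ω using le_max_right _ _) hGint).1 hGzero
    filter_upwards [hG0, hGy] with ω h0 hg
    rw [← hg, EReal.coe_le_coe_iff]
    have : Real.arctan (Lr ω) - Real.arctan (Gy ω) ≤ 0 := by
      by_contra hcon
      push_neg at hcon
      simp only [hGdef, Pi.zero_apply] at h0
      rw [max_eq_left (le_of_lt hcon)] at h0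
      linarith
    exact Real.arctan_strictMono.le_iff_le.1 (by linarith)
  -- final gluing
  set C : ℕ → Set Ω := fun k => {ω | Fr k ω ≤ Lr ω + δ} with hCdef
  have hCm : ∀ k, MeasurableSet (C k) :=
    fun k => measurableSet_le (hFrm k) (hLrm.add measurable_const)
  obtain ⟨z, hz⟩ := glue_exists N hCC Y (fixPart C)
    (fixPart_meas hCm) (fixPart_disj C) (fixPart_cover C)
  have hcovae : ∀ᵐ ω ∂P, ω ∈ ⋃ k, C k := by
    filter_upwards [hA5] with ω h5
    rw [Metric.tendsto_atTop] at h5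
    obtain ⟨NN, hNN⟩ := h5 δ hδ
    have := hNN NN le_rfl
    rw [Real.dist_eq, abs_lt] at this
    refine mem_iUnion.mpr ⟨NN, ?_⟩
    simp only [hCdef, mem_setOf_eq]
    linarith [this.1]
  refine ⟨z, ?_, ?_⟩
  · filter_upwards [glue_ae N φ hloc (fixPart_meas hCm) (fixPart_cover C) hz x,
      ae_all_iff.2 hYS] with ω hω hS
    obtain ⟨k, -, e1, e2⟩ := hω
    calc φ z ω + (N.nm (z - x) ω : EReal) = φ (Y k) ω + (N.nm (Y k - x) ω : EReal) := by
          rw [e1, e2]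
      _ ≤ φ x ω := hS k
  · intro y hyS
    filter_upwards [glue_ae N φ hloc (fixPart_meas hCm) (fixPart_cover C) hz x,
      hcovae, ae_all_iff.2 hFr, hFatou y hyS] with ω hω hcov hfr hfat
    obtain ⟨k, hk, e1, -⟩ := hω
    have hCk : ω ∈ C k := by
      rcases fixPart_sub C k hk with h | h
      · exact h
      · exact absurd hcov h
    rw [hCdef] at hCk
    calc φ z ω = ((Fr k ω : ℝ) : EReal) := by rw [e1, hfr k]
      _ ≤ ((Lr ω + δ : ℝ) : EReal) := EReal.coe_le_coe_iff.2 hCk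
      _ = ((Lr ω : ℝ) : EReal) + (δ : EReal) := by rw [EReal.coe_add]
      _ ≤ φ y ω + (δ : EReal) := add_le_add hfat le_rfl

lemma one_mem_L0pp : (1 : L0 P) ∈ L0pp P := by
  show ∀ᵐ ω ∂P, 0 < (1 : L0 P) ω
  filter_upwards [AEEqFun.coeFn_one (β := ℝ) (μ := P)] with ω h
  rw [h]; norm_num

lemma inf_mem_L0pp {ε ε' : L0 P} (h : ε ∈ L0pp P) (h' : ε' ∈ L0pp P) :
    ε ⊓ ε' ∈ L0pp P := by
  show ∀ᵐ ω ∂P, 0 < (ε ⊓ ε') ω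
  filter_upwards [h, h', AEEqFun.coeFn_inf ε ε'] with ω a b c
  rw [c]; exact lt_min a b

lemma coeFn_inf_le_left (ε ε' : L0 P) : ∀ᵐ ω ∂P, (ε ⊓ ε') ω ≤ ε ω := by
  filter_upwards [AEEqFun.coeFn_inf ε ε'] with ω c
  rw [c]; exact min_le_left _ _

lemma coeFn_inf_le_right (ε ε' : L0 P) : ∀ᵐ ω ∂P, (ε ⊓ ε') ω ≤ ε' ω := by
  filter_upwards [AEEqFun.coeFn_inf ε ε'] with ω c
  rw [c]; exact min_le_right _ _

lemma mem_biInf_L0pp {α : Type*} (g : L0 P → Set α)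
    (hmono : ∀ ε ε' : L0 P, (∀ᵐ ω ∂P, ε ω ≤ ε' ω) → g ε ⊆ g ε') {s : Set α} :
    s ∈ (⨅ ε ∈ L0pp P, 𝓟 (g ε)) ↔ ∃ ε ∈ L0pp P, g ε ⊆ s := by
  have hne : Nonempty ↥(L0pp P) := ⟨⟨1, one_mem_L0pp⟩⟩
  have hdir : Directed (fun x1 x2 => x1 ≥ x2)
      (fun ε : ↥(L0pp P) => 𝓟 (g ε.1)) := by
    intro a b
    refine ⟨⟨a.1 ⊓ b.1, inf_mem_L0pp a.2 b.2⟩, ?_, ?_⟩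
    · exact principal_mono.2 (hmono _ _ (coeFn_inf_le_left _ _))
    · exact principal_mono.2 (hmono _ _ (coeFn_inf_le_right _ _))
  have heq : (⨅ ε ∈ L0pp P, 𝓟 (g ε)) = ⨅ ε : ↥(L0pp P), 𝓟 (g ε.1) := by
    rw [iInf_subtype']
  rw [heq, mem_iInf_of_directed hdir]
  constructor
  · rintro ⟨ε, hε⟩; exact ⟨ε.1, ε.2, mem_principal.1 hε⟩
  · rintro ⟨ε, hε, hsub⟩; exact ⟨⟨ε, hε⟩, mem_principal.2 hsub⟩

/-- Small-step arithmetic helper. -/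
lemma le_of_le_add_two_div (a b : ℝ) (h : ∀ j : ℕ, a ≤ b + 2/(j+1)) : a ≤ b := by
  refine le_of_forall_pos_le_add fun ζ hζ => ?_
  obtain ⟨j, hj⟩ := exists_nat_gt (2/ζ)
  have hjpos : (0:ℝ) < j + 1 := by positivity
  have h2 : 2/((j:ℝ)+1) < ζ := by
    rw [div_lt_iff₀ hjpos]
    have h3 : 2/ζ < (j:ℝ) + 1 := hj.trans (lt_add_one _)
    calc (2:ℝ) = (2/ζ) * ζ := by field_simp
      _ < ((j:ℝ)+1) * ζ := by exact mul_lt_mul_of_pos_right h3 hζ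
      _ = ζ * ((j:ℝ)+1) := mul_comm _ _
  exact (h j).trans (by linarith)

/-- The core limit construction. -/
lemma core [IsProbabilityMeasure P] (hcomp : N.cComplete) (hCC : N.HasCC Set.univ)
    (φ : E → L0e P) (hloc : N.LocalProp φ) (hlsc : N.cLscOn φ Set.univ)
    (ξ : L0 P) (hξ : ∀ y : E, ∀ᵐ ω ∂P, (ξ ω : EReal) ≤ φ y ω)
    (X : ℕ → E) (hfin : ∀ n, ∀ᵐ ω ∂P, φ (X n) ω < ⊤)
    (hchain : ∀ n, CLe N φ (X (n+1)) (X n))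
    (happrox : ∀ n (y : E), CLe N φ y (X n) →
      ∀ᵐ ω ∂P, φ (X (n+1)) ω ≤ φ y ω + ((((1:ℝ)/2)^n : ℝ) : EReal)) :
    ∃ u : E, (∀ n, CLe N φ u (X n)) ∧
      ∀ y : E, (∀ n, CLe N φ y (X n)) → ∀ᵐ ω ∂P, φ u ω ≤ φ y ω := by
  classical
  have hchain' : ∀ n m, n ≤ m → CLe N φ (X m) (X n) := by
    intro n m hnm
    induction m with
    | zero => rw [Nat.le_zero.1 hnm]; exact cle_refl N φ _
    | succ m ih =>
      rcases Nat.lt_or_ge n (m+1) with h | h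
      · exact cle_trans N φ (hchain m) (ih (Nat.lt_succ_iff.1 h))
      · rw [le_antisymm hnm h]; exact cle_refl N φ _
  have hXreal : ∀ n, ∀ᵐ ω ∂P, φ (X n) ω ≠ ⊥ ∧ φ (X n) ω ≠ ⊤ := by
    intro n
    filter_upwards [hξ (X n), hfin n] with ω a b
    exact ⟨(lt_of_lt_of_le (EReal.bot_lt_coe _) a).ne', b.ne⟩
  -- real representatives
  have hXme : ∀ n, AEMeasurable (φ (X n) : Ω → EReal) P := fun n => (φ (X n)).aemeasurable
  set Fr : ℕ → Ω → ℝ := fun n ω => ((hXme n).mk _ ω).toReal with hFrdef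
  have hFrm : ∀ n, Measurable (Fr n) :=
    fun n => measurable_ereal_toReal.comp (hXme n).measurable_mk
  have hFr : ∀ n, ∀ᵐ ω ∂P, ((Fr n ω : ℝ) : EReal) = φ (X n) ω := by
    intro n
    filter_upwards [(hXme n).ae_eq_mk, hXreal n] with ω h hr
    rw [hFrdef]; dsimp only
    rw [← h, EReal.coe_toReal (h ▸ hr.2) (h ▸ hr.1)]
  set ηr : Ω → ℝ := fun ω => (⨅ n, ((Fr n ω : ℝ) : EReal)).toReal with hηrdef
  have hηrm : Measurable ηr := measurable_ereal_toReal.comp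
    (Measurable.iInf (fun k => measurable_coe_real_ereal.comp (hFrm k)))
  set η : L0 P := AEEqFun.mk ηr hηrm.aestronglyMeasurable with hηdef
  have hηcoe : (η : Ω → ℝ) =ᵐ[P] ηr := AEEqFun.coeFn_mk _ _
  have hB1 : ∀ᵐ ω ∂P, ∀ n, Fr (n+1) ω ≤ Fr n ω := by
    rw [ae_all_iff]
    intro n
    filter_upwards [hFr n, hFr (n+1), cle_phi_mono N φ (hchain n)] with ω a b c
    exact EReal.coe_le_coe_iff.1 (by rw [a, b]; exact c)
  have hB2 : ∀ᵐ ω ∂P, ∀ n, ξ ω ≤ Fr n ω := by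
    rw [ae_all_iff]
    intro n
    filter_upwards [hFr n, hξ (X n)] with ω a b
    exact EReal.coe_le_coe_iff.1 (by rw [a]; exact b)
  have hB3 : ∀ᵐ ω ∂P, (∀ n, ηr ω ≤ Fr n ω) ∧
      Tendsto (fun n => Fr n ω) atTop (𝓝 (ηr ω)) := by
    filter_upwards [hB1, hB2] with ω h1 h2
    have hb : ((ξ ω : ℝ) : EReal) ≤ ⨅ k, ((Fr k ω : ℝ) : EReal) :=
      le_iInf fun k => EReal.coe_le_coe_iff.2 (h2 k)
    have hnb : (⨅ k, ((Fr k ω : ℝ) : EReal)) ≠ ⊥ :=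
      (lt_of_lt_of_le (EReal.bot_lt_coe _) hb).ne'
    have hnt : (⨅ k, ((Fr k ω : ℝ) : EReal)) ≠ ⊤ :=
      (lt_of_le_of_lt (iInf_le (fun k => ((Fr k ω : ℝ) : EReal)) 0) (EReal.coe_lt_top _)).ne
    have hηeq : ((ηr ω : ℝ) : EReal) = ⨅ k, ((Fr k ω : ℝ) : EReal) := by
      rw [hηrdef]; exact EReal.coe_toReal hnt hnb
    have hlow : ∀ n, ηr ω ≤ Fr n ω := by
      intro n
      have hle : (⨅ k, ((Fr k ω : ℝ) : EReal)) ≤ ((Fr n ω : ℝ) : EReal) :=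
        iInf_le (fun k => ((Fr k ω : ℝ) : EReal)) n
      rw [← hηeq] at hle
      exact EReal.coe_le_coe_iff.1 hle
    refine ⟨hlow, ?_⟩
    rw [Metric.tendsto_atTop]
    intro ζ hζ
    have hlt : (⨅ k, ((Fr k ω : ℝ) : EReal)) < ((ηr ω + ζ : ℝ) : EReal) := by
      rw [← hηeq]; exact_mod_cast lt_add_of_pos_right _ hζ
    obtain ⟨NN, hNN⟩ := iInf_lt_iff.1 hlt
    refine ⟨NN, fun n hn => ?_⟩
    have hanti : Fr n ω ≤ Fr NN ω := by
      clear hNN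
      induction n with
      | zero => simpa [Nat.le_zero.1 hn] using le_refl _
      | succ n ih =>
        rcases Nat.lt_or_ge NN (n+1) with h | h
        · exact le_trans (h1 n) (ih (Nat.lt_succ_iff.1 h))
        · rw [le_antisymm hn h]
    have hlt2 : Fr n ω < ηr ω + ζ := lt_of_le_of_lt hanti (EReal.coe_lt_coe_iff.1 hNN)
    rw [Real.dist_eq, abs_lt]
    exact ⟨by linarith [hlow n], by linarith⟩
  -- the key one-sided bounds
  have hub : ∀ n m, n ≤ m → ∀ᵐ ω ∂P, Fr (n+1) ω ≤ Fr (m+1) ω + ((1:ℝ)/2)^n := by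
    intro n m hnm
    filter_upwards [happrox n (X (m+1)) (hchain' n (m+1) (by omega)),
      hFr (n+1), hFr (m+1)] with ω h a b
    rw [← a, ← b, ← EReal.coe_add] at h
    exact EReal.coe_le_coe_iff.1 h
  have hK1 : ∀ n, ∀ᵐ ω ∂P, Fr (n+1) ω ≤ ηr ω + ((1:ℝ)/2)^n := by
    intro n
    have hall := ae_all_iff.2 fun m => ae_all_iff.2 fun (hnm : n ≤ m) => hub n m hnm
    filter_upwards [hall, hB3] with ω hω h3
    have htend : Tendsto (fun m => Fr (m+1) ω + ((1:ℝ)/2)^n) atTop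
        (𝓝 (ηr ω + ((1:ℝ)/2)^n)) :=
      Tendsto.add_const _ (h3.2.comp (tendsto_add_atTop_nat 1))
    refine ge_of_tendsto htend ?_
    filter_upwards [eventually_ge_atTop n] with m hm
    exact hω m hm
  have hnm_le : ∀ n m, n ≤ m → ∀ᵐ ω ∂P,
      N.nm (X (m+1) - X (n+1)) ω ≤ ((1:ℝ)/2)^n := by
    intro n m hnm
    filter_upwards [hchain' (n+1) (m+1) (by omega),
      happrox n (X (m+1)) (hchain' n (m+1) (by omega)),
      hFr (n+1), hFr (m+1)] with ω h1 h2 a b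
    rw [← a, ← b] at h1 h2
    rw [← EReal.coe_add] at h1 h2
    have r1 := EReal.coe_le_coe_iff.1 h1
    have r2 := EReal.coe_le_coe_iff.1 h2
    linarith
  have hK2 : ∀ n m, ∀ᵐ ω ∂P,
      N.nm (X (n+1) - X (m+1)) ω ≤ ((1:ℝ)/2)^(min n m) := by
    intro n m
    rcases le_total n m with h | h
    · rw [min_eq_left h, nm_sub_comm' N]
      exact hnm_le n m h
    · rw [min_eq_right h]
      exact hnm_le m n h
  -- the Cauchy filter of subordinate gluings
  have hne : Nonempty ↥(L0pp P) := ⟨⟨1, one_mem_L0pp⟩⟩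
  have hEne : Nonempty E := ⟨X 0⟩
  set Fil : Filter E := ⨅ ε : ↥(L0pp P), 𝓟 {z | Subord N X ε.1 z} with hFildef
  have hdir : Directed (fun x1 x2 => x1 ≥ x2)
      (fun ε : ↥(L0pp P) => 𝓟 {z | Subord N X ε.1 z}) := by
    intro a b
    refine ⟨⟨a.1 ⊓ b.1, inf_mem_L0pp a.2 b.2⟩, ?_, ?_⟩
    · exact principal_mono.2 (fun z hz => subord_mono N (coeFn_inf_le_left _ _) hz)
    · exact principal_mono.2 (fun z hz => subord_mono N (coeFn_inf_le_right _ _) hz)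
  have hmemFil : ∀ s : Set E, s ∈ Fil ↔ ∃ ε : ↥(L0pp P), {z | Subord N X ε.1 z} ⊆ s := by
    intro s
    rw [hFildef, mem_iInf_of_directed hdir]
    simp only [mem_principal]
  have hFne : Fil.NeBot := by
    rw [hFildef]
    refine iInf_neBot_of_directed hdir (fun ε => ?_)
    rw [principal_neBot_iff]
    exact subord_nonempty N hCC X ε.2
  have hcauchy : Fil ×ˢ Fil ≤ N.cUniformity := by
    refine le_iInf₂ fun ε hε => ?_
    rw [le_principal_iff]
    have hV : {z | Subord N X ε z} ∈ Fil := (hmemFil _).2 ⟨⟨ε, hε⟩, subset_rfl⟩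
    refine mem_of_superset (prod_mem_prod hV hV) ?_
    rintro ⟨z, z'⟩ ⟨hz, hz'⟩
    exact subord_pair N hK2 hz hz'
  obtain ⟨u, hu⟩ := hcomp Fil hFne hcauchy
  have hballmono : ∀ ε ε' : L0 P, (∀ᵐ ω ∂P, ε ω ≤ ε' ω) →
      {y : E | ∀ᵐ ω ∂P, N.nm (y - u) ω ≤ ε ω} ⊆ {y | ∀ᵐ ω ∂P, N.nm (y - u) ω ≤ ε' ω} := by
    intro ε ε' h y hy
    filter_upwards [hy, h] with ω a b using a.trans b
  have hballmono2 : ∀ ε ε' : L0 P, (∀ᵐ ω ∂P, ε ω ≤ ε' ω) →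
      {s : L0 P | ∀ᵐ ω ∂P, |s ω - η ω| ≤ ε ω} ⊆ {s | ∀ᵐ ω ∂P, |s ω - η ω| ≤ ε' ω} := by
    intro ε ε' h s hs
    filter_upwards [hs, h] with ω a b using a.trans b
  have hstar : ∀ ε ∈ L0pp P, ∃ ε₀ ∈ L0pp P,
      ∀ z, Subord N X ε₀ z → ∀ᵐ ω ∂P, N.nm (z - u) ω ≤ ε ω := by
    intro ε hε
    have hball : {y : E | ∀ᵐ ω ∂P, N.nm (y - u) ω ≤ ε ω} ∈ Fil :=
      hu (show _ ∈ N.cNhds u from (mem_biInf_L0pp _ hballmono).2 ⟨ε, hε, subset_rfl⟩)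
    obtain ⟨ε₀, hsub⟩ := (hmemFil _).1 hball
    exact ⟨ε₀.1, ε₀.2, fun z hz => hsub hz⟩
  -- lower semicontinuity at u
  have hφuη : ∀ᵐ ω ∂P, φ u ω ≤ ((ηr ω : ℝ) : EReal) := by
    have hnebot : ((N.cNhds u ×ˢ cNhdsL0 P η) ⊓
        𝓟 {p : E × L0 P | p.1 ∈ Set.univ ∧ ∀ᵐ ω ∂P, φ p.1 ω ≤ (p.2 ω : EReal)}).NeBot := by
      rw [← forall_mem_nonempty_iff_neBot]
      intro s hs
      rw [mem_inf_iff] at hs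
      obtain ⟨t₁, ht₁, t₂, ht₂, rfl⟩ := hs
      rw [mem_prod_iff] at ht₁
      obtain ⟨a, ha, b, hb, hab⟩ := ht₁
      obtain ⟨ε₁, hε₁, hsub₁⟩ := (mem_biInf_L0pp _ hballmono).1 ha
      obtain ⟨ε₂, hε₂, hsub₂⟩ := (mem_biInf_L0pp _ hballmono2).1 hb
      obtain ⟨ε₀, hε₀, hst⟩ := hstar ε₁ hε₁
      have hδpp : ε₀ ⊓ ε₂ ∈ L0pp P := inf_mem_L0pp hε₀ hε₂
      obtain ⟨z, hz⟩ := subord_nonempty N hCC X hδpp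
      have hz₁ : z ∈ a := hsub₁ (hst z (subord_mono N (coeFn_inf_le_left _ _) hz))
      have hr₂ : (η + ε₀ ⊓ ε₂) ∈ b := by
        refine hsub₂ ?_
        show ∀ᵐ ω ∂P, |(η + ε₀ ⊓ ε₂) ω - η ω| ≤ ε₂ ω
        filter_upwards [AEEqFun.coeFn_add η (ε₀ ⊓ ε₂), hδpp, coeFn_inf_le_right ε₀ ε₂]
          with ω h1 h2 h3
        rw [h1]
        simp only [Pi.add_apply, add_sub_cancel_left]
        rw [abs_of_pos h2]; exact h3
      have hepi : ∀ᵐ ω ∂P, φ z ω ≤ (((η + ε₀ ⊓ ε₂) ω : ℝ) : EReal) := by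
        filter_upwards [subord_ae N φ hloc hz 0, ae_all_iff.2 hK1,
          ae_all_iff.2 hFr, hηcoe, AEEqFun.coeFn_add η (ε₀ ⊓ ε₂)]
          with ω hω k1 fr hη hadd
        obtain ⟨m, hm, e1, -⟩ := hω
        rw [e1, ← fr (m+1), hadd]
        simp only [Pi.add_apply]
        rw [hη]
        refine EReal.coe_le_coe_iff.2 ?_
        have := k1 m
        linarith
      exact ⟨(z, η + ε₀ ⊓ ε₂), hab (Set.mk_mem_prod hz₁ hr₂),
        mem_principal.1 ht₂ ⟨mem_univ _, hepi⟩⟩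
    have := hlsc u η (mem_univ u) hnebot
    filter_upwards [this, hηcoe] with ω h hc
    rwa [hc] at h
  -- `u` lies below the whole sequence
  have hs1 : ∀ n m : ℕ, ∀ᵐ ω ∂P, n ≤ m →
      Fr (m+1) ω + N.nm (X (m+1) - X (n+1)) ω ≤ Fr (n+1) ω := by
    intro n m
    rcases le_or_gt n m with h | h
    · filter_upwards [hchain' (n+1) (m+1) (by omega), hFr (n+1), hFr (m+1)]
        with ω h1 a b _
      rw [← a, ← b, ← EReal.coe_add] at h1
      exact EReal.coe_le_coe_iff.1 h1
    · filter_upwards with ω hcon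
      omega
  have hnmu : ∀ n, ∀ᵐ ω ∂P, N.nm (u - X (n+1)) ω ≤ Fr (n+1) ω - ηr ω := by
    intro n
    have hjj : ∀ j : ℕ, ∀ᵐ ω ∂P,
        N.nm (u - X (n+1)) ω ≤ (Fr (n+1) ω - ηr ω) + 2/((j:ℝ)+1) := by
      intro j
      set cst : L0 P := AEEqFun.const Ω (1/((j:ℝ)+1)) with hcstdef
      have hcstcoe : (cst : Ω → ℝ) =ᵐ[P] fun _ => 1/((j:ℝ)+1) := AEEqFun.coeFn_const _ _
      have hcst : cst ∈ L0pp P := by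
        show ∀ᵐ ω ∂P, 0 < cst ω
        filter_upwards [hcstcoe] with ω h
        rw [h]; positivity
      obtain ⟨ε₀, hε₀, hst⟩ := hstar cst hcst
      have hδpp : ε₀ ⊓ cst ∈ L0pp P := inf_mem_L0pp hε₀ hcst
      obtain ⟨z, hz⟩ := subord_nonempty N hCC X hδpp
      have h1 : ∀ᵐ ω ∂P, N.nm (z - u) ω ≤ 1/((j:ℝ)+1) := by
        filter_upwards [hst z (subord_mono N (coeFn_inf_le_left _ _) hz), hcstcoe]
          with ω a b
        rwa [b] at a
      have h2 : ∀ᵐ ω ∂P, N.nm (z - X (n+1)) ω ≤ (Fr (n+1) ω - ηr ω) + 1/((j:ℝ)+1) := by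
        filter_upwards [subord_ae N φ hloc hz (X (n+1)),
          ae_all_iff.2 (fun m => hK2 m n),
          ae_all_iff.2 (hs1 n), hB3, coeFn_inf_le_right ε₀ cst, hcstcoe]
          with ω hω k2 s1 h3 hle hc
        obtain ⟨m, hm, -, e2⟩ := hω
        rw [e2]
        rcases le_or_gt n m with hcase | hcase
        · have := s1 m hcase
          have hη1 := h3.1 (m+1)
          have hpos : (0:ℝ) < 1/((j:ℝ)+1) := by positivity
          linarith
        · have hk := k2 m
          rw [min_eq_left (by omega : m ≤ n)] at hk
          have hη1 := h3.1 (n+1)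
          have hjle : ((1:ℝ)/2)^m ≤ 1/((j:ℝ)+1) := by
            calc ((1:ℝ)/2)^m ≤ (ε₀ ⊓ cst) ω := hm
              _ ≤ cst ω := hle
              _ = 1/((j:ℝ)+1) := hc
          linarith
      have htri := N.nm_add_le (u - z) (z - X (n+1))
      rw [sub_add_sub_cancel, nm_sub_comm' N u z] at htri
      filter_upwards [h1, h2, htri] with ω a b c
      calc N.nm (u - X (n+1)) ω ≤ N.nm (z - u) ω + N.nm (z - X (n+1)) ω := c
        _ ≤ 1/((j:ℝ)+1) + ((Fr (n+1) ω - ηr ω) + 1/((j:ℝ)+1)) := add_le_add a b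
        _ = (Fr (n+1) ω - ηr ω) + 2/((j:ℝ)+1) := by ring
    filter_upwards [ae_all_iff.2 hjj] with ω hω
    exact le_of_le_add_two_div _ _ hω
  have hLeu' : ∀ n, CLe N φ u (X (n+1)) := by
    intro n
    show ∀ᵐ ω ∂P, φ u ω + (N.nm (u - X (n+1)) ω : EReal) ≤ φ (X (n+1)) ω
    filter_upwards [hφuη, hnmu n, hFr (n+1)] with ω h1 h2 h3
    calc φ u ω + (N.nm (u - X (n+1)) ω : EReal)
        ≤ ((ηr ω : ℝ) : EReal) + ((Fr (n+1) ω - ηr ω : ℝ) : EReal) :=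
          add_le_add h1 (EReal.coe_le_coe_iff.2 h2)
      _ = ((Fr (n+1) ω : ℝ) : EReal) := by
          rw [← EReal.coe_add]; norm_num
      _ = φ (X (n+1)) ω := h3
  have hLeu : ∀ n, CLe N φ u (X n) := by
    intro n
    cases n with
    | zero => exact cle_trans N φ (hLeu' 0) (hchain 0)
    | succ n => exact hLeu' n
  refine ⟨u, hLeu, ?_⟩
  intro y hy
  have h5 : ∀ n : ℕ, ∀ᵐ ω ∂P, ((ηr ω : ℝ) : EReal) ≤ φ y ω + ((((1:ℝ)/2)^n : ℝ) : EReal) := by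
    intro n
    filter_upwards [happrox n y (hy n), hFr (n+1), hB3] with ω hap a h3
    calc ((ηr ω : ℝ) : EReal) ≤ ((Fr (n+1) ω : ℝ) : EReal) :=
          EReal.coe_le_coe_iff.2 (h3.1 (n+1))
      _ = φ (X (n+1)) ω := a
      _ ≤ φ y ω + ((((1:ℝ)/2)^n : ℝ) : EReal) := hap
  filter_upwards [ae_all_iff.2 h5, hφuη, hξ y] with ω h5ω h1 h2
  by_cases ht : φ y ω = ⊤
  · rw [ht]; exact le_top
  · have hnb : φ y ω ≠ ⊥ := (lt_of_lt_of_le (EReal.bot_lt_coe _) h2).ne'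
    have hty : φ y ω = (((φ y ω).toReal : ℝ) : EReal) := (EReal.coe_toReal ht hnb).symm
    have hr : ∀ n : ℕ, ηr ω ≤ (φ y ω).toReal + ((1:ℝ)/2)^n := by
      intro n
      have := h5ω n
      rw [hty, ← EReal.coe_add] at this
      exact EReal.coe_le_coe_iff.1 this
    have hfin2 : ηr ω ≤ (φ y ω).toReal := by
      refine le_of_forall_pos_le_add fun ζ hζ => ?_
      obtain ⟨n, hn⟩ := exists_pow_lt_of_lt_one hζ (by norm_num : (1:ℝ)/2 < 1)
      exact (hr n).trans (by linarith)
    exact h1.trans (by rw [hty]; exact EReal.coe_le_coe_iff.2 hfin2)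

end CaristiAux

/-- Theorem 3.11: Caristi's fixed point theorem on a `𝒯_c`-complete RN
module with the countable concatenation property, for a proper, `𝒯_c`-lower
semicontinuous, bounded-from-below function with the local property. -/
theorem caristi_Tc
    {Ω : Type*} [MeasurableSpace Ω] {P : Measure Ω} [IsProbabilityMeasure P]
    {E : Type*} [AddCommGroup E] (N : RNModule P E) (hcomp : N.cComplete)
    (hCCE : N.HasCC Set.univ)
    (φ : E → L0e P)
    (hproper : ProperOn φ Set.univ) (hlsc : N.cLscOn φ Set.univ)
    (hbdd : BddBelowOn φ Set.univ) (hloc : N.LocalProp φ)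
    (T : E → E)
    (hT : ∀ u : E, ∀ᵐ ω ∂P, φ (T u) ω + (N.nm (T u - u) ω : EReal) ≤ φ u ω) :
    ∃ u : E, T u = u := by
  classical
  obtain ⟨-, x₀, -, hx₀⟩ := hproper
  obtain ⟨ξ, hξ0⟩ := hbdd
  have hξ : ∀ y : E, ∀ᵐ ω ∂P, (ξ ω : EReal) ≤ φ y ω := fun y => hξ0 y (mem_univ y)
  have hstep : ∀ x : E, (∀ᵐ ω ∂P, φ x ω < ⊤) → ∀ n : ℕ,
      ∃ x' : E, (∀ᵐ ω ∂P, φ x' ω < ⊤) ∧ CLe N φ x' x ∧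
        ∀ y, CLe N φ y x → ∀ᵐ ω ∂P, φ x' ω ≤ φ y ω + ((((1:ℝ)/2)^n : ℝ) : EReal) := by
    intro x hx n
    obtain ⟨x', h1, h2⟩ := exists_approx N hCCE φ hloc ξ hξ x hx (((1:ℝ)/2)^n)
      (by positivity)
    refine ⟨x', ?_, h1, h2⟩
    filter_upwards [cle_phi_mono N φ h1, hx] with ω a b using lt_of_le_of_lt a b
  set F : ℕ → {x : E // ∀ᵐ ω ∂P, φ x ω < ⊤} :=
    fun n => Nat.rec ⟨x₀, hx₀⟩
      (fun n p => ⟨(hstep p.1 p.2 n).choose, (hstep p.1 p.2 n).choose_spec.1⟩) n with hFdef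
  have hchain : ∀ n, CLe N φ (F (n+1)).1 (F n).1 :=
    fun n => (hstep (F n).1 (F n).2 n).choose_spec.2.1
  have happrox : ∀ n (y : E), CLe N φ y (F n).1 →
      ∀ᵐ ω ∂P, φ (F (n+1)).1 ω ≤ φ y ω + ((((1:ℝ)/2)^n : ℝ) : EReal) :=
    fun n y hy => (hstep (F n).1 (F n).2 n).choose_spec.2.2 y hy
  obtain ⟨u, h1, h2⟩ := core N hcomp hCCE φ hloc hlsc ξ hξ (fun n => (F n).1)
    (fun n => (F n).2) hchain happrox
  have hTu : CLe N φ (T u) u := hT u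
  have hTn : ∀ n, CLe N φ (T u) (F n).1 := fun n => cle_trans N φ hTu (h1 n)
  have hle := h2 (T u) hTn
  have hnm : N.nm (T u - u) = 0 := by
    refine AEEqFun.ext ?_
    filter_upwards [hT u, hle, hξ (T u), cle_phi_mono N φ (h1 0), (F 0).2,
      N.nm_nonneg (T u - u), AEEqFun.coeFn_zero (β := ℝ) (μ := P),
      cle_phi_mono N φ hTu] with ω a b c d e f g i
    rw [g]
    have htop : φ (T u) ω ≠ ⊤ := (lt_of_le_of_lt (i.trans d) e).ne
    have hbot2 : φ (T u) ω ≠ ⊥ := (lt_of_lt_of_le (EReal.bot_lt_coe _) c).ne'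
    have heq : φ (T u) ω = (((φ (T u) ω).toReal : ℝ) : EReal) :=
      (EReal.coe_toReal htop hbot2).symm
    have hchain2 : φ (T u) ω + (N.nm (T u - u) ω : EReal) ≤ φ (T u) ω := a.trans b
    rw [heq, ← EReal.coe_add] at hchain2
    have hreal2 := EReal.coe_le_coe_iff.1 hchain2
    have hle0 : N.nm (T u - u) ω ≤ 0 := by linarith
    simpa using le_antisymm hle0 f
  exact ⟨u, sub_eq_zero.1 ((N.nm_eq_zero_iff (T u - u)).1 hnm)⟩

end GYY
end

section
/- Let E be an RN module over ℝ with base (Ω,𝓕,P) such that E has the countable concatenation property, and f : E → L̄⁰(𝓕) a function with the local property. Then the epigraph epi(f) := {(x,r) ∈ E × L⁰(𝓕) : f(x) ≤ r} has the countable concatenation property as a subset of the L⁰(𝓕)-module E × L⁰(𝓕) (with componentwise module operations). -/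
open MeasureTheory ENNReal Set Filter

namespace GYY

variable {Ω : Type*} [MeasurableSpace Ω]

/-- Lemma 4.10. If `E` has the countable concatenation property and
`f : E → L̄⁰(𝓕)` has the local property, then `epi(f) = {(x,r) ∈ E × L⁰ : f(x) ≤ r}` has
the countable concatenation property as a subset of the product `L⁰(𝓕)`-module
`E × L⁰(𝓕)`. -/
theorem epigraph_hasCC
    {Ω : Type*} [MeasurableSpace Ω] {P : Measure Ω} [IsProbabilityMeasure P]
    {E : Type*} [AddCommGroup E] (N : RNModule P E)
    (hCCE : N.HasCC Set.univ)
    (f : E → L0e P) (hloc : N.LocalProp f) :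
    N.HasCCProd {p : E × L0 P | ∀ᵐ ω ∂P, f p.1 ω ≤ (p.2 ω : EReal)} := by
  classical
  intro p hp A hA hdisj hUnion
  obtain ⟨y, -, hy⟩ := hCCE (fun n => (p n).1) (fun _ => mem_univ _) A hA hdisj hUnion
  have hex : ∀ ω : Ω, ∃ n, ω ∈ A n := by
    intro ω
    have : ω ∈ ⋃ n, A n := hUnion ▸ mem_univ ω
    simpa using this
  have huniq : ∀ {ω n m}, ω ∈ A n → ω ∈ A m → n = m := by
    intro ω n m hn hm
    by_contra hnm
    exact Set.disjoint_left.1 (hdisj n m hnm) hn hm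
  let idx : Ω → ℕ := fun ω => Nat.find (hex ω)
  have hidx : ∀ ω, ω ∈ A (idx ω) := fun ω => Nat.find_spec (hex ω)
  let h : Ω → ℝ := fun ω => (p (idx ω)).2 ω
  have hAn : ∀ {n ω}, ω ∈ A n → h ω = (p n).2 ω := by
    intro n ω hω
    have : idx ω = n := huniq (hidx ω) hω
    simp only [h, this]
  have hmeas : AEStronglyMeasurable h P := by
    apply aestronglyMeasurable_of_tendsto_ae (u := atTop)
      (f := fun N ω => ∑ n ∈ Finset.range N, (A n).indicator (fun ω => (p n).2 ω) ω)
    · intro N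
      exact Finset.aestronglyMeasurable_fun_sum _ fun n _ =>
        ((p n).2.aestronglyMeasurable).indicator (hA n)
    · filter_upwards with ω
      apply tendsto_atTop_of_eventually_const (i₀ := idx ω + 1)
      intro N hN
      rw [Finset.sum_eq_single (idx ω)]
      · simp [Set.indicator_of_mem (hidx ω), h]
      · intro b _ hb
        exact Set.indicator_of_notMem (fun hb' => hb (huniq hb' (hidx ω))) _
      · intro hmem
        exact absurd (Finset.mem_range.mpr (lt_of_lt_of_le (Nat.lt_succ_self _) hN)) hmem
  refine ⟨(y, AEEqFun.mk h hmeas), ?_, ?_⟩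
  · have hs : (AEEqFun.mk h hmeas : L0 P) =ᵐ[P] h := AEEqFun.coeFn_mk _ _
    have e1 : ∀ᵐ ω ∂P, ∀ n, ω ∈ A n → f y ω = f (N.smul (indL0 P (A n) (hA n)) y) ω :=
      ae_all_iff.2 fun n => hloc y (A n) (hA n)
    have e2 : ∀ᵐ ω ∂P, ∀ n, ω ∈ A n →
        f (p n).1 ω = f (N.smul (indL0 P (A n) (hA n)) (p n).1) ω :=
      ae_all_iff.2 fun n => hloc (p n).1 (A n) (hA n)
    have e3 : ∀ᵐ ω ∂P, ∀ n, f (p n).1 ω ≤ ((p n).2 ω : EReal) := ae_all_iff.2 hp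
    filter_upwards [e1, e2, e3, hs] with ω H1 H2 H3 Hs
    set n := idx ω with hn
    calc f y ω = f (N.smul (indL0 P (A n) (hA n)) y) ω := H1 n (hidx ω)
      _ = f (N.smul (indL0 P (A n) (hA n)) (p n).1) ω := by rw [hy n]
      _ = f (p n).1 ω := (H2 n (hidx ω)).symm
      _ ≤ ((p n).2 ω : EReal) := H3 n
      _ = ((AEEqFun.mk h hmeas : L0 P) ω : EReal) := by
          rw [Hs]
  · intro n
    refine ⟨hy n, ?_⟩
    apply AEEqFun.ext
    have hind : (indL0 P (A n) (hA n) : L0 P) =ᵐ[P] (A n).indicator fun _ => (1 : ℝ) :=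
      AEEqFun.coeFn_mk _ _
    have hs : (AEEqFun.mk h hmeas : L0 P) =ᵐ[P] h := AEEqFun.coeFn_mk _ _
    filter_upwards [AEEqFun.coeFn_mul (indL0 P (A n) (hA n)) (AEEqFun.mk h hmeas),
      AEEqFun.coeFn_mul (indL0 P (A n) (hA n)) ((p n).2), hind, hs] with ω Hm1 Hm2 Hi Hs
    rw [Hm1, Hm2]
    simp only [Pi.mul_apply, Hi, Hs]
    by_cases hω : ω ∈ A n
    · rw [hAn hω]
    · simp [Set.indicator_of_notMem hω]

end GYY
end
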